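/- For every real number x, the function x ↦ log(1 + x + x²/2) satisfies the two-sided bound −x⁴/38 ≤ log(1 + x + x²/2) − x + x³/6 ≤ x⁴/6. (Note that 1 + x + x²/2 > 0 for all real x, so the logarithm is well defined.) -/

import Mathlib

open Real

/-- If `f` has derivative `f'` everywhere, with `f' ≥ 0` on `[0,∞)` and `f' ≤ 0` on `(-∞,0]`,
then `f 0 ≤ f x` for all `x`. -/
lemma aux_min_at_zero (f f' : ℝ → ℝ) (hd : ∀ x, HasDerivAt f (f' x) x)
    (hpos : ∀ x, 0 ≤ x → 0 ≤ f' x) (hneg : ∀ x, x ≤ 0 → f' x ≤ 0) (x : ℝ) :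
    f 0 ≤ f x := by
  have hdiff : ∀ y, DifferentiableAt ℝ f y := fun y => (hd y).differentiableAt
  rcases le_total 0 x with h | h
  · have hm : MonotoneOn f (Set.Ici 0) := by
      apply monotoneOn_of_deriv_nonneg (convex_Ici 0)
        ((Differentiable.continuous hdiff).continuousOn)
      · intro y hy
        exact (hdiff y).differentiableWithinAt
      · intro y hy
        rw [(hd y).deriv]
        exact hpos y (le_of_lt (by simpa using hy))
    exact hm (by simp) (by simpa using h) h
  · have hm : AntitoneOn f (Set.Iic 0) := by
      apply antitoneOn_of_deriv_nonpos (convex_Iic 0)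
        ((Differentiable.continuous hdiff).continuousOn)
      · intro y hy
        exact (hdiff y).differentiableWithinAt
      · intro y hy
        exact (hd y).deriv ▸ hneg y (le_of_lt (by simpa using hy))
    exact hm (by simpa using h) (by simp) h

theorem log_quad_bounds (x : ℝ) :
    -x ^ 4 / 38 ≤ Real.log (1 + x + x ^ 2 / 2) - x + x ^ 3 / 6 ∧
    Real.log (1 + x + x ^ 2 / 2) - x + x ^ 3 / 6 ≤ x ^ 4 / 6 := by
  have hq : ∀ y : ℝ, 0 < 1 + y + y ^ 2 / 2 := fun y => by nlinarith [sq_nonneg (y + 1)]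
  have hqd : ∀ y : ℝ, HasDerivAt (fun t : ℝ => 1 + t + t ^ 2 / 2) (1 + y) y := by
    intro y
    have h1 : HasDerivAt (fun t : ℝ => 1 + t + t ^ 2 / 2) (0 + 1 + (2 * y ^ 1 * 1) / 2) y := by
      exact (((hasDerivAt_const y (1:ℝ)).add (hasDerivAt_id y)).add
        (((hasDerivAt_id y).pow 2).div_const 2))
    simpa using h1
  have hlogd : ∀ y : ℝ, HasDerivAt (fun t : ℝ => Real.log (1 + t + t ^ 2 / 2))
      ((1 + y) / (1 + y + y ^ 2 / 2)) y := fun y => (hqd y).log (hq y).ne'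
  constructor
  · -- lower bound: G x = log q - x + x^3/6 + x^4/38 ≥ 0
    set G : ℝ → ℝ := fun t => Real.log (1 + t + t ^ 2 / 2) - t + t ^ 3 / 6 + t ^ 4 / 38 with hG
    have hGd : ∀ y : ℝ, HasDerivAt G
        ((1 + y) / (1 + y + y ^ 2 / 2) - 1 + (3 * y ^ 2) / 6 + (4 * y ^ 3) / 38) y := by
      intro y
      have := (((hlogd y).sub (hasDerivAt_id y)).add
        (((hasDerivAt_id y).pow 3).div_const 6)).add
        (((hasDerivAt_id y).pow 4).div_const 38)
      exact this.congr_deriv (by simp only [id]; norm_num)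
    have key : ∀ y : ℝ, G 0 ≤ G y := by
      apply aux_min_at_zero G _ hGd
      · intro y hy
        have hqy := hq y
        rw [← sub_nonneg] at *
        have h2 : 1 - y ^ 2 / 2 - 2 * y ^ 3 / 19 ≤ (1 + y) / (1 + y + y ^ 2 / 2) := by
          rw [le_div_iff₀ hqy]
          nlinarith [mul_nonneg (mul_nonneg hy (mul_nonneg hy hy)) (sq_nonneg (y + 27 / 8)),
            mul_nonneg hy (mul_nonneg hy hy)]
        linarith
      · intro y hy
        have hqy := hq y
        have h2 : (1 + y) / (1 + y + y ^ 2 / 2) ≤ 1 - y ^ 2 / 2 - 2 * y ^ 3 / 19 := by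
          rw [div_le_iff₀ hqy]
          nlinarith [mul_nonpos_of_nonpos_of_nonneg
            (by nlinarith [mul_nonpos_of_nonpos_of_nonneg hy (sq_nonneg y)] :
              y ^ 3 ≤ 0) (sq_nonneg (y + 27 / 8))]
        linarith
    have h0 : G 0 = 0 := by simp [G]
    have := key x
    rw [h0] at this
    simp only [G] at this
    linarith
  · -- upper bound: F x = x - x^3/6 + x^4/6 - log q ≥ 0
    set F : ℝ → ℝ := fun t => t - t ^ 3 / 6 + t ^ 4 / 6 - Real.log (1 + t + t ^ 2 / 2) with hF
    have hFd : ∀ y : ℝ, HasDerivAt F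
        (1 - (3 * y ^ 2) / 6 + (4 * y ^ 3) / 6 - (1 + y) / (1 + y + y ^ 2 / 2)) y := by
      intro y
      have := (((hasDerivAt_id y).sub (((hasDerivAt_id y).pow 3).div_const 6)).add
        (((hasDerivAt_id y).pow 4).div_const 6)).sub (hlogd y)
      exact this.congr_deriv (by simp only [id]; norm_num)
    have key : ∀ y : ℝ, F 0 ≤ F y := by
      apply aux_min_at_zero F _ hFd
      · intro y hy
        have hqy := hq y
        have h2 : (1 + y) / (1 + y + y ^ 2 / 2) ≤ 1 - y ^ 2 / 2 + 2 * y ^ 3 / 3 := by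
          rw [div_le_iff₀ hqy]
          nlinarith [mul_nonneg (mul_nonneg hy (mul_nonneg hy hy)) (sq_nonneg (y + 5 / 8)),
            mul_nonneg hy (mul_nonneg hy hy)]
        linarith
      · intro y hy
        have hqy := hq y
        have h2 : 1 - y ^ 2 / 2 + 2 * y ^ 3 / 3 ≤ (1 + y) / (1 + y + y ^ 2 / 2) := by
          rw [le_div_iff₀ hqy]
          nlinarith [mul_nonpos_of_nonpos_of_nonneg
            (by nlinarith [mul_nonpos_of_nonpos_of_nonneg hy (sq_nonneg y)] :
              y ^ 3 ≤ 0) (sq_nonneg (y + 5 / 8))]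
        linarith
    have h0 : F 0 = 0 := by simp [F]
    have := key x
    rw [h0] at this
    simp only [F] at this
    linarith
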